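/- In a complete metric space (M, d), with J : M → ℝ ∪ {+∞} proper, lower semicontinuous, bounded below, and ū a minimizer of J: the existence of δ ∈ (0, +∞] such that every Lipschitz perturbation ζ with Lip ζ < γ yields argmin(J + ζ) ∩ B(ū, δ) ⊆ {ū} is equivalent to the existence of δ′ ∈ (0, +∞] such that J(u) ≥ J(ū) + γ·d(u, ū) for all u ∈ B(ū, δ′). -/

import Mathlib

private lemma ekeland_real {X : Type*} [MetricSpace X] [CompleteSpace X]
    (g : X → ℝ) (hg : LowerSemicontinuous g) (c : ℝ) (hc : ∀ x, c ≤ g x)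
    (κ : ℝ) (hκ : 0 < κ) (x₀ : X) :
    ∃ v : X, g v + κ * dist v x₀ ≤ g x₀ ∧ ∀ w : X, g v ≤ g w + κ * dist w v := by
  set F : X → Set X := fun x => {w | g w + κ * dist w x ≤ g x} with hF
  have mem_self : ∀ x, x ∈ F x := by intro x; simp [hF]
  have htrans : ∀ x w z, w ∈ F x → z ∈ F w → z ∈ F x := by
    intro x w z hw hz
    simp only [hF, Set.mem_setOf_eq] at *
    have := dist_triangle z w x
    nlinarith [dist_nonneg (x := z) (y := w)]
  have hclosed : ∀ x, IsClosed (F x) := by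
    intro x
    have : LowerSemicontinuous fun w => g w + κ * dist w x :=
      hg.add (Continuous.lowerSemicontinuous (by continuity))
    exact this.isClosed_preimage (g x)
  have hbdd : ∀ x, BddBelow (g '' F x) := by
    intro x
    exact ⟨c, by rintro y ⟨w, _, rfl⟩; exact hc w⟩
  have hne : ∀ x, (g '' F x).Nonempty := fun x => ⟨g x, x, mem_self x, rfl⟩
  have hstep : ∀ (n : ℕ) (x : X), ∃ w, w ∈ F x ∧ g w < sInf (g '' F x) + (1/2)^n := by
    intro n x
    have : sInf (g '' F x) < sInf (g '' F x) + (1/2)^n := by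
      have : (0:ℝ) < (1/2)^n := by positivity
      linarith
    obtain ⟨y, ⟨w, hw, rfl⟩, hy⟩ := exists_lt_of_csInf_lt (hne x) this
    exact ⟨w, hw, hy⟩
  choose step hstep1 hstep2 using hstep
  set seq : ℕ → X := fun n => Nat.rec x₀ step n with hseq
  have hseq0 : seq 0 = x₀ := rfl
  have hseqS : ∀ n, seq (n+1) = step n (seq n) := fun n => rfl
  have h1 : ∀ n, seq (n+1) ∈ F (seq n) := fun n => hstep1 n (seq n)
  have h2 : ∀ n, g (seq (n+1)) < sInf (g '' F (seq n)) + (1/2)^n := fun n => hstep2 n (seq n)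
  have hmem : ∀ n m, n ≤ m → seq m ∈ F (seq n) := by
    intro n m hnm
    induction m, hnm using Nat.le_induction with
    | base => exact mem_self _
    | succ m hm ih => exact htrans _ _ _ ih (h1 m)
  -- Cauchy
  have hkey : ∀ n, κ * dist (seq n) (seq (n+1)) ≤ g (seq n) - g (seq (n+1)) := by
    intro n
    have := h1 n
    simp only [hF, Set.mem_setOf_eq] at this
    rw [dist_comm]
    linarith
  have hsum : Summable fun n => dist (seq n) (seq (n+1)) := by
    apply summable_of_sum_range_le (c := (g x₀ - c)/κ) (fun n => dist_nonneg)
    intro n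
    rw [le_div_iff₀ hκ]
    have : ∑ i ∈ Finset.range n, (g (seq i) - g (seq (i+1))) = g (seq 0) - g (seq n) :=
      Finset.sum_range_sub' (fun i => g (seq i)) n
    calc (∑ i ∈ Finset.range n, dist (seq i) (seq (i+1))) * κ
        = ∑ i ∈ Finset.range n, κ * dist (seq i) (seq (i+1)) := by
          rw [Finset.sum_mul]; exact Finset.sum_congr rfl fun i _ => mul_comm _ _
      _ ≤ ∑ i ∈ Finset.range n, (g (seq i) - g (seq (i+1))) :=
          Finset.sum_le_sum fun i _ => hkey i
      _ = g (seq 0) - g (seq n) := this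
      _ ≤ g x₀ - c := by rw [hseq0]; linarith [hc (seq n)]
  obtain ⟨v, hv⟩ := cauchySeq_tendsto_of_complete (cauchySeq_of_summable_dist hsum)
  have hvF : ∀ n, v ∈ F (seq n) := by
    intro n
    refine (hclosed (seq n)).mem_of_tendsto hv ?_
    filter_upwards [Filter.eventually_ge_atTop n] with m hm using hmem n m hm
  have hfix : ∀ w, w ∈ F v → w = v := by
    intro w hw
    have hwn : ∀ n, w ∈ F (seq n) := fun n => htrans _ _ _ (hvF n) hw
    have hd : ∀ n, κ * dist w (seq (n+1)) ≤ (1/2)^n := by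
      intro n
      have ha := hwn (n+1)
      have hb := h2 n
      have hcs : sInf (g '' F (seq n)) ≤ g w :=
        csInf_le (hbdd (seq n)) ⟨w, hwn n, rfl⟩
      simp only [hF, Set.mem_setOf_eq] at ha
      linarith
    have hT1 : Filter.Tendsto (fun n => dist w (seq (n+1))) Filter.atTop (nhds (dist w v)) :=
      tendsto_const_nhds.dist (hv.comp (Filter.tendsto_add_atTop_nat 1))
    have hT2 : Filter.Tendsto (fun n : ℕ => (1/2:ℝ)^n / κ) Filter.atTop (nhds 0) := by
      have := (tendsto_pow_atTop_nhds_zero_of_lt_one (by norm_num : (0:ℝ) ≤ 1/2)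
        (by norm_num : (1/2:ℝ) < 1)).div_const κ
      simpa using this
    have hle : dist w v ≤ 0 := by
      refine le_of_tendsto_of_tendsto' hT1 hT2 fun n => ?_
      rw [le_div_iff₀ hκ]
      have := hd n
      linarith
    exact eq_of_dist_eq_zero (le_antisymm hle dist_nonneg)
  refine ⟨v, ?_, ?_⟩
  · have := hvF 0
    simp only [hF, Set.mem_setOf_eq, hseq0] at this
    exact this
  · intro w
    by_cases h : g w + κ * dist w v ≤ g v
    · rw [hfix w h]; simp
    · linarith [not_le.1 h]

private lemma ekeland_ereal {M : Type*} [MetricSpace M] [CompleteSpace M]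
    (f : M → EReal) (hbot : ∀ u, f u ≠ ⊥) (hlsc : LowerSemicontinuous f)
    (c : ℝ) (hc : ∀ u, ((c : ℝ) : EReal) ≤ f u) (κ : ℝ) (hκ : 0 < κ)
    (x₀ : M) (hx₀ : f x₀ ≠ ⊤) :
    ∃ v : M, f v + ((κ * dist v x₀ : ℝ) : EReal) ≤ f x₀ ∧
      ∀ w : M, f v ≤ f w + ((κ * dist w v : ℝ) : EReal) := by
  set A : Set M := {w | f w ≤ f x₀} with hA
  have hAclosed : IsClosed A := hlsc.isClosed_preimage (f x₀)
  haveI : CompleteSpace A := hAclosed.completeSpace_coe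
  have hfin : ∀ w : A, f (w : M) ≠ ⊤ := fun w => (lt_of_le_of_lt w.2 hx₀.lt_top).ne
  set g : A → ℝ := fun w => (f (w : M)).toReal with hgdef
  have hgf : ∀ w : A, f (w : M) = ((g w : ℝ) : EReal) :=
    fun w => (EReal.coe_toReal (hfin w) (hbot _)).symm
  have hg : LowerSemicontinuous g := by
    intro x t ht
    have hcomp : LowerSemicontinuous fun w : A => f (w : M) :=
      hlsc.comp continuous_subtype_val
    have h1 : ((t : ℝ) : EReal) < f (x : M) := by
      rw [hgf x]; exact_mod_cast ht
    filter_upwards [hcomp x _ h1] with w hw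
    rw [hgf w] at hw
    exact_mod_cast hw
  have hgc : ∀ w, c ≤ g w := by
    intro w
    have := hc (w : M)
    rw [hgf w] at this
    exact_mod_cast this
  have hx₀mem : x₀ ∈ A := le_refl (f x₀)
  obtain ⟨v, hv1, hv2⟩ := ekeland_real g hg c hgc κ hκ ⟨x₀, hx₀mem⟩
  have hx₀A : f ((⟨x₀, hx₀mem⟩ : A) : M) = ((g ⟨x₀, hx₀mem⟩ : ℝ) : EReal) := hgf _
  refine ⟨(v : M), ?_, ?_⟩
  · rw [hgf v, show f x₀ = ((g ⟨x₀, hx₀mem⟩ : ℝ) : EReal) from hx₀A, ← EReal.coe_add,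
      EReal.coe_le_coe_iff]
    simpa [Subtype.dist_eq] using hv1
  · intro w
    by_cases hw : f w ≤ f x₀
    · have := hv2 ⟨w, hw⟩
      rw [hgf v, show f w = ((g ⟨w, hw⟩ : ℝ) : EReal) from hgf ⟨w, hw⟩, ← EReal.coe_add,
        EReal.coe_le_coe_iff]
      simpa [Subtype.dist_eq] using this
    · have h1 : f (v : M) ≤ f x₀ := v.2
      have h2 : f x₀ ≤ f w := le_of_not_ge hw
      have h3 : f w ≤ f w + ((κ * dist w (v : M) : ℝ) : EReal) :=
        le_add_of_nonneg_right (by exact_mod_cast mul_nonneg hκ.le dist_nonneg)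
      exact h1.trans (h2.trans h3)


/-- in a complete metric space, local stability of the minimizer under
Lipschitz perturbations with constant < γ is equivalent to sharp local minimality
with modulus γ (for possibly different radii δ, δ′ ∈ (0,∞]). -/
theorem lipschitz_stability_iff_sharp_local_min
    {M : Type*} [MetricSpace M] [CompleteSpace M]
    (J : M → EReal) (hbot : ∀ u, J u ≠ ⊥) (hproper : ∃ u, J u ≠ ⊤)
    (hlsc : LowerSemicontinuous J) (hbdd : ∃ c : ℝ, ∀ u, ((c : ℝ) : EReal) ≤ J u)
    (ubar : M) (hmin : ∀ v : M, J ubar ≤ J v) (γ : ℝ) (hγ : 0 < γ) :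
    (∃ δ : ENNReal, 0 < δ ∧
        ∀ (ζ : M → ℝ) (K : NNReal), LipschitzWith K ζ → (K : ℝ) < γ →
          ∀ u ∈ EMetric.closedBall ubar δ,
            (∀ v : M, J u + ((ζ u : ℝ) : EReal) ≤ J v + ((ζ v : ℝ) : EReal)) → u = ubar)
      ↔ (∃ δ' : ENNReal, 0 < δ' ∧
          ∀ u ∈ EMetric.closedBall ubar δ',
            J ubar + ((γ * dist u ubar : ℝ) : EReal) ≤ J u) := by
  obtain ⟨c, hc⟩ := hbdd
  have hJtop : J ubar ≠ ⊤ := by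
    obtain ⟨u0, hu0⟩ := hproper
    exact fun h => hu0 (top_le_iff.1 (h ▸ hmin u0))
  set b := (J ubar).toReal with hbdef
  have hJb : J ubar = ((b : ℝ) : EReal) := (EReal.coe_toReal hJtop (hbot ubar)).symm
  constructor
  · rintro ⟨δ, hδ, hstab⟩
    refine ⟨δ / 2, ENNReal.half_pos hδ.ne', fun u hu => ?_⟩
    by_contra hcon
    push_neg at hcon
    rw [hJb, ← EReal.coe_add] at hcon
    have hJu_top : J u ≠ ⊤ := ne_top_of_lt hcon
    set a := (J u).toReal with hadef
    have hJa : J u = ((a : ℝ) : EReal) := (EReal.coe_toReal hJu_top (hbot u)).symm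
    rw [hJa] at hcon
    have hconR : a < b + γ * dist u ubar := by exact_mod_cast hcon
    have hab : b ≤ a := by
      have := hmin u
      rw [hJa, hJb] at this
      exact_mod_cast this
    have hd : 0 < dist u ubar := by
      rcases lt_or_eq_of_le (dist_nonneg (x := u) (y := ubar)) with h | h
      · exact h
      · rw [← h] at hconR; linarith
    set d := dist u ubar with hddef
    set t := (a - b) / d with htdef
    have ht0 : 0 ≤ t := div_nonneg (by linarith) hd.le
    have htγ : t < γ := (div_lt_iff₀ hd).2 (by linarith)
    set κ := (t + γ) / 2 with hκdef
    have hκ0 : 0 < κ := by rw [hκdef]; linarith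
    have hκγ : κ < γ := by rw [hκdef]; linarith
    have htκ : t < κ := by rw [hκdef]; linarith
    obtain ⟨v, hv1, hv2⟩ := ekeland_ereal J hbot hlsc c hc κ hκ0 u hJu_top
    have hJv_le : J v ≤ J u :=
      le_trans (le_add_of_nonneg_right
        (by exact_mod_cast mul_nonneg hκ0.le dist_nonneg)) hv1
    have hJv_top : J v ≠ ⊤ := fun h => hJu_top (top_le_iff.1 (h ▸ hJv_le))
    set e := (J v).toReal with hedef
    have hJe : J v = ((e : ℝ) : EReal) := (EReal.coe_toReal hJv_top (hbot v)).symm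
    have hv1R : e + κ * dist v u ≤ a := by
      rw [hJe, hJa, ← EReal.coe_add, EReal.coe_le_coe_iff] at hv1
      exact hv1
    have hbe : b ≤ e := by
      have := hmin v
      rw [hJe, hJb] at this
      exact_mod_cast this
    have htd : t * d = a - b := div_mul_cancel₀ (a - b) hd.ne'
    have hdvu : dist v u < d := by
      have h1 : κ * dist v u ≤ t * d := by rw [htd]; linarith
      have h2 : t * d < κ * d := mul_lt_mul_of_pos_right htκ hd
      have := h1.trans_lt h2
      exact lt_of_mul_lt_mul_left this hκ0.le
    have hvne : v ≠ ubar := by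
      intro h
      rw [h, dist_comm] at hdvu
      exact lt_irrefl _ hdvu
    have hball : v ∈ EMetric.closedBall ubar δ := by
      show edist v ubar ≤ δ
      have h1 : edist v u ≤ edist u ubar := by
        rw [edist_dist, edist_dist]
        exact ENNReal.ofReal_le_ofReal hdvu.le
      calc edist v ubar ≤ edist v u + edist u ubar := edist_triangle _ _ _
        _ ≤ δ / 2 + δ / 2 := add_le_add (h1.trans hu) hu
        _ = δ := ENNReal.add_halves δ
    have hlip : LipschitzWith κ.toNNReal (fun w => κ * dist w v) := by
      apply LipschitzWith.of_dist_le_mul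
      intro x y
      rw [Real.dist_eq, Real.coe_toNNReal _ hκ0.le, ← mul_sub, abs_mul, abs_of_nonneg hκ0.le]
      exact mul_le_mul_of_nonneg_left (abs_dist_sub_le x y v) hκ0.le
    have := hstab (fun w => κ * dist w v) κ.toNNReal hlip
      (by rw [Real.coe_toNNReal _ hκ0.le]; exact hκγ) v hball
      (by
        intro w
        simp only [dist_self, mul_zero, EReal.coe_zero, add_zero]
        exact hv2 w)
    exact hvne this
  · rintro ⟨δ', hδ', hgrow⟩
    refine ⟨δ', hδ', fun ζ K hK hKγ u hu hminu => ?_⟩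
    have h1 := hminu ubar
    rw [hJb, ← EReal.coe_add] at h1
    have hJu_top : J u ≠ ⊤ := by
      intro h
      rw [h, EReal.top_add_coe] at h1
      exact (EReal.coe_ne_top _) (top_le_iff.1 h1)
    set a := (J u).toReal with hadef
    have hJa : J u = ((a : ℝ) : EReal) := (EReal.coe_toReal hJu_top (hbot u)).symm
    rw [hJa, ← EReal.coe_add] at h1
    have h1R : a + ζ u ≤ b + ζ ubar := by exact_mod_cast h1
    have h2 := hgrow u hu
    rw [hJa, hJb, ← EReal.coe_add] at h2
    have h2R : b + γ * dist u ubar ≤ a := by exact_mod_cast h2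
    have hlip : ζ ubar - ζ u ≤ (K : ℝ) * dist u ubar := by
      have := hK.dist_le_mul ubar u
      rw [Real.dist_eq, dist_comm] at this
      calc ζ ubar - ζ u ≤ |ζ ubar - ζ u| := le_abs_self _
        _ ≤ (K : ℝ) * dist u ubar := this
    have hd0 : dist u ubar ≤ 0 := by nlinarith [dist_nonneg (x := u) (y := ubar)]
    exact eq_of_dist_eq_zero (le_antisymm hd0 dist_nonneg)
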